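/- arXiv:2303.00226 — 2 statements merged into one kernel-verified Lean document; each statement's English description precedes it below -/
import Mathlib

section
/- Correctness of the recovery phase (Theorem 2, made explicit): let d be an odd prime, m ≥ 1, and fix shares S, T : Fin m → ZMod d and a recovery vector λ : Fin m → ZMod d, and set s₁ = Σ_j λ j · S j and s₂ = Σ_j λ j · T j. Fix arbitrary q₁, s₃, u₁, u₂, u₃ ∈ ZMod d. Apply to the GHZ state Ψ_{u₁,u₂,u₃} the following operators in order: (i) U_{q₁,q₁} on the first qudit; (ii) U_{λ_j·S_j, λ_j·T_j} on the first qudit for j = 2, …, m; (iii) U_{−u₁, u₂} on the second qudit and U_{0, u₃+s₂−s₃} on the third qudit; (iv) U_{λ₁·S₁−q₁, λ₁·T₁−q₁} on the first qudit. Then the resulting state equals c · Ψ_{s₁,s₂,s₃} for some complex number c with |c| = 1; hence a GHZ-state joint measurement yields the outcome (s₁, s₂, s₃) with certainty. -/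
/-- ω = exp(2πi/d), the primitive d-th root of unity used throughout. -/
noncomputable def omega (d : ℕ) : ℂ := Complex.exp (2 * Real.pi * Complex.I / d)

/-- The generalized three-qudit GHZ state Ψ_{u₁,u₂,u₃}, modeled as a function
`(ZMod d) × (ZMod d) × (ZMod d) → ℂ`. -/
noncomputable def GHZ3 (d : ℕ) (u₁ u₂ u₃ : ZMod d) :
    ZMod d × ZMod d × ZMod d → ℂ := fun p =>
  if p.2.1 = p.1 + u₂ ∧ p.2.2 = p.1 + u₃ then
    (1 / Real.sqrt d : ℂ) * omega d ^ (p.1 * u₁).val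
  else 0

/-- The generalized Pauli operator `U_{α,β}` applied to the first qudit. -/
noncomputable def pauliFst (d : ℕ) (α β : ZMod d)
    (f : ZMod d × ZMod d × ZMod d → ℂ) : ZMod d × ZMod d × ZMod d → ℂ :=
  fun p => omega d ^ (p.1 * α).val * f (p.1 + β, p.2.1, p.2.2)

/-- The generalized Pauli operator `U_{α,β}` applied to the second qudit. -/
noncomputable def pauliSnd (d : ℕ) (α β : ZMod d)
    (f : ZMod d × ZMod d × ZMod d → ℂ) : ZMod d × ZMod d × ZMod d → ℂ :=
  fun p => omega d ^ (p.2.1 * α).val * f (p.1, p.2.1 + β, p.2.2)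

/-- The generalized Pauli operator `U_{α,β}` applied to the third qudit. -/
noncomputable def pauliTrd (d : ℕ) (α β : ZMod d)
    (f : ZMod d × ZMod d × ZMod d → ℂ) : ZMod d × ZMod d × ZMod d → ℂ :=
  fun p => omega d ^ (p.2.2 * α).val * f (p.1, p.2.1, p.2.2 + β)

lemma omega_pow_d {d : ℕ} (hd : 0 < d) : omega d ^ d = 1 := by
  have hdne : (d : ℂ) ≠ 0 := Nat.cast_ne_zero.2 hd.ne'
  rw [omega, ← Complex.exp_nat_mul]
  have : (d : ℂ) * (2 * Real.pi * Complex.I / d) = 2 * Real.pi * Complex.I := by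
    field_simp
  rw [this, Complex.exp_two_pi_mul_I]

lemma omega_val_add {d : ℕ} (hd : 0 < d) (a b : ZMod d) :
    omega d ^ (a + b).val = omega d ^ a.val * omega d ^ b.val := by
  haveI : NeZero d := ⟨hd.ne'⟩
  rw [← pow_add]
  conv_rhs => rw [← Nat.mod_add_div (a.val + b.val) d]
  rw [pow_add, pow_mul, omega_pow_d hd, one_pow, mul_one, ZMod.val_add]

lemma omega_key {d : ℕ} (hd : 0 < d) {a b a' b' : ZMod d} (h : a + b = a' + b') :
    omega d ^ a.val * omega d ^ b.val = omega d ^ a'.val * omega d ^ b'.val := by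
  rw [← omega_val_add hd, ← omega_val_add hd, h]

lemma abs_omega {d : ℕ} (hd : 0 < d) : ‖omega d‖ = 1 := by
  have : omega d = Complex.exp ((2 * Real.pi / d : ℝ) * Complex.I) := by
    rw [omega]; push_cast; ring
  rw [this, Complex.norm_exp_ofReal_mul_I]

lemma pauliFst_GHZ {d : ℕ} (hd : 0 < d) (α β u₁ u₂ u₃ : ZMod d) :
    pauliFst d α β (GHZ3 d u₁ u₂ u₃)
      = (omega d ^ (β * u₁).val) • GHZ3 d (u₁ + α) (u₂ + β) (u₃ + β) := by
  funext p
  obtain ⟨j₁, j₂, j₃⟩ := p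
  simp only [pauliFst, GHZ3, Pi.smul_apply, smul_eq_mul]
  have hc : (j₂ = j₁ + β + u₂ ∧ j₃ = j₁ + β + u₃)
      ↔ (j₂ = j₁ + (u₂ + β) ∧ j₃ = j₁ + (u₃ + β)) := by
    constructor <;> rintro ⟨h1, h2⟩ <;>
      exact ⟨by linear_combination h1, by linear_combination h2⟩
  simp only [hc]
  split_ifs with h
  · have hk := omega_key hd (a := j₁ * α) (b := (j₁ + β) * u₁)
      (a' := β * u₁) (b' := j₁ * (u₁ + α)) (by ring)
    linear_combination ((1 : ℂ) / (Real.sqrt d : ℂ)) * hk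
  · ring

lemma pauliSnd_GHZ {d : ℕ} (hd : 0 < d) (α β u₁ u₂ u₃ : ZMod d) :
    pauliSnd d α β (GHZ3 d u₁ u₂ u₃)
      = (omega d ^ ((u₂ - β) * α).val) • GHZ3 d (u₁ + α) (u₂ - β) u₃ := by
  funext p
  obtain ⟨j₁, j₂, j₃⟩ := p
  simp only [pauliSnd, GHZ3, Pi.smul_apply, smul_eq_mul]
  have hc : (j₂ + β = j₁ + u₂ ∧ j₃ = j₁ + u₃)
      ↔ (j₂ = j₁ + (u₂ - β) ∧ j₃ = j₁ + u₃) := by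
    constructor <;> rintro ⟨h1, h2⟩ <;>
      exact ⟨by linear_combination h1, h2⟩
  simp only [hc]
  split_ifs with h
  · have hk := omega_key hd (a := j₂ * α) (b := j₁ * u₁)
      (a' := (u₂ - β) * α) (b' := j₁ * (u₁ + α)) (by linear_combination α * h.1)
    linear_combination ((1 : ℂ) / (Real.sqrt d : ℂ)) * hk
  · ring

lemma pauliTrd_GHZ {d : ℕ} (hd : 0 < d) (α β u₁ u₂ u₃ : ZMod d) :
    pauliTrd d α β (GHZ3 d u₁ u₂ u₃)
      = (omega d ^ ((u₃ - β) * α).val) • GHZ3 d (u₁ + α) u₂ (u₃ - β) := by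
  funext p
  obtain ⟨j₁, j₂, j₃⟩ := p
  simp only [pauliTrd, GHZ3, Pi.smul_apply, smul_eq_mul]
  have hc : (j₂ = j₁ + u₂ ∧ j₃ + β = j₁ + u₃)
      ↔ (j₂ = j₁ + u₂ ∧ j₃ = j₁ + (u₃ - β)) := by
    constructor <;> rintro ⟨h1, h2⟩ <;>
      exact ⟨h1, by linear_combination h2⟩
  simp only [hc]
  split_ifs with h
  · have hk := omega_key hd (a := j₃ * α) (b := j₁ * u₁)
      (a' := (u₃ - β) * α) (b' := j₁ * (u₁ + α)) (by linear_combination α * h.2)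
    linear_combination ((1 : ℂ) / (Real.sqrt d : ℂ)) * hk
  · ring

lemma pauliFst_smul {d : ℕ} (α β : ZMod d) (c : ℂ) (f : ZMod d × ZMod d × ZMod d → ℂ) :
    pauliFst d α β (c • f) = c • pauliFst d α β f := by
  funext p; simp only [pauliFst, Pi.smul_apply, smul_eq_mul]; ring

lemma pauliSnd_smul {d : ℕ} (α β : ZMod d) (c : ℂ) (f : ZMod d × ZMod d × ZMod d → ℂ) :
    pauliSnd d α β (c • f) = c • pauliSnd d α β f := by
  funext p; simp only [pauliSnd, Pi.smul_apply, smul_eq_mul]; ring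

lemma pauliTrd_smul {d : ℕ} (α β : ZMod d) (c : ℂ) (f : ZMod d × ZMod d × ZMod d → ℂ) :
    pauliTrd d α β (c • f) = c • pauliTrd d α β f := by
  funext p; simp only [pauliTrd, Pi.smul_apply, smul_eq_mul]; ring

lemma fold_pauliFst_smul {d m : ℕ} (S T lam : Fin m → ZMod d) (l : List (Fin m)) (c : ℂ)
    (f : ZMod d × ZMod d × ZMod d → ℂ) :
    l.foldl (fun f j => pauliFst d (lam j * S j) (lam j * T j) f) (c • f)
      = c • l.foldl (fun f j => pauliFst d (lam j * S j) (lam j * T j) f) f := by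
  induction l generalizing f with
  | nil => rfl
  | cons j l ih => simp only [List.foldl_cons, pauliFst_smul, ih]

lemma fold_pauliFst_GHZ {d m : ℕ} (hd : 0 < d) (S T lam : Fin m → ZMod d)
    (l : List (Fin m)) (a b e : ZMod d) :
    ∃ c : ℂ, ‖c‖ = 1 ∧
      l.foldl (fun f j => pauliFst d (lam j * S j) (lam j * T j) f) (GHZ3 d a b e)
        = c • GHZ3 d (a + (l.map fun j => lam j * S j).sum)
            (b + (l.map fun j => lam j * T j).sum)
            (e + (l.map fun j => lam j * T j).sum) := by
  induction l generalizing a b e with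
  | nil => exact ⟨1, by simp, by simp⟩
  | cons j l ih =>
    obtain ⟨c, hc, heq⟩ := ih (a + lam j * S j) (b + lam j * T j) (e + lam j * T j)
    refine ⟨omega d ^ ((lam j * T j) * a).val * c, ?_, ?_⟩
    · simp [map_mul, map_pow, abs_omega hd, hc]
    · simp only [List.foldl_cons, pauliFst_GHZ hd, fold_pauliFst_smul, heq,
        List.map_cons, List.sum_cons, smul_smul, add_assoc]

/-- Correctness of the recovery phase (Theorem 2, made explicit).  Starting from the GHZ state
`Ψ_{u₁,u₂,u₃}`, apply in order: (i) `U_{q₁,q₁}` on the first qudit; (ii) `U_{λ_j·S_j, λ_j·T_j}`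
on the first qudit for the participants `j = 2, …, m` (indices `j ≠ 0` of `Fin m`);
(iii) `U_{−u₁,u₂}` on the second qudit and `U_{0, u₃+s₂−s₃}` on the third qudit;
(iv) `U_{λ₁·S₁−q₁, λ₁·T₁−q₁}` on the first qudit.  The result is `c • Ψ_{s₁,s₂,s₃}` with
`|c| = 1`, where `s₁ = Σ_j λ_j·S_j` and `s₂ = Σ_j λ_j·T_j`; hence a GHZ-state joint
measurement yields the outcome `(s₁, s₂, s₃)` with certainty. -/
theorem recovery_correct (d : ℕ) (hd : d.Prime) (hodd : Odd d) (m : ℕ) [NeZero m]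
    (S T lam : Fin m → ZMod d) (s₁ s₂ : ZMod d)
    (hs₁ : s₁ = ∑ j, lam j * S j) (hs₂ : s₂ = ∑ j, lam j * T j)
    (q₁ s₃ u₁ u₂ u₃ : ZMod d) :
    ∃ c : ℂ, ‖c‖ = 1 ∧
      pauliFst d (lam 0 * S 0 - q₁) (lam 0 * T 0 - q₁)
        (pauliTrd d 0 (u₃ + s₂ - s₃)
          (pauliSnd d (-u₁) u₂
            (((List.finRange m).drop 1).foldl
              (fun f j => pauliFst d (lam j * S j) (lam j * T j) f)
              (pauliFst d q₁ q₁ (GHZ3 d u₁ u₂ u₃))))) =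
        c • GHZ3 d s₁ s₂ s₃ := by
  have hd0 : 0 < d := hd.pos
  obtain ⟨n, rfl⟩ := Nat.exists_eq_succ_of_ne_zero (NeZero.ne m)
  set l : List (Fin (n + 1)) := (List.finRange (n + 1)).drop 1 with hl
  set A : ZMod d := (l.map fun j => lam j * S j).sum with hA'
  set B : ZMod d := (l.map fun j => lam j * T j).sum with hB'
  have hdrop : l = (List.finRange n).map Fin.succ := by
    rw [hl, List.finRange_succ]; rfl
  have hA : A = s₁ - lam 0 * S 0 := by
    rw [hA', hdrop, List.map_map]
    have h1 : ((List.finRange n).map ((fun j => lam j * S j) ∘ Fin.succ)).sum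
        = ∑ j : Fin n, lam j.succ * S j.succ := (Fin.sum_univ_def _).symm
    rw [h1, hs₁, Fin.sum_univ_succ]
    ring
  have hB : B = s₂ - lam 0 * T 0 := by
    rw [hB', hdrop, List.map_map]
    have h1 : ((List.finRange n).map ((fun j => lam j * T j) ∘ Fin.succ)).sum
        = ∑ j : Fin n, lam j.succ * T j.succ := (Fin.sum_univ_def _).symm
    rw [h1, hs₂, Fin.sum_univ_succ]
    ring
  obtain ⟨c₁, hc₁, h₁⟩ := fold_pauliFst_GHZ hd0 S T lam l (u₁ + q₁) (u₂ + q₁) (u₃ + q₁)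
  rw [← hA', ← hB'] at h₁
  rw [pauliFst_GHZ hd0 q₁ q₁ u₁ u₂ u₃, fold_pauliFst_smul, h₁,
    pauliSnd_smul, pauliSnd_smul, pauliSnd_GHZ hd0,
    pauliTrd_smul, pauliTrd_smul, pauliTrd_smul, pauliTrd_GHZ hd0,
    pauliFst_smul, pauliFst_smul, pauliFst_smul, pauliFst_smul, pauliFst_GHZ hd0]
  have hX : u₁ + q₁ + A + -u₁ + 0 + (lam 0 * S 0 - q₁) = s₁ := by
    linear_combination hA
  have hY : u₂ + q₁ + B - u₂ + (lam 0 * T 0 - q₁) = s₂ := by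
    linear_combination hB
  have hZ : u₃ + q₁ + B - (u₃ + s₂ - s₃) + (lam 0 * T 0 - q₁) = s₃ := by
    linear_combination hB
  rw [hX, hY, hZ, smul_smul, smul_smul, smul_smul, smul_smul]
  refine ⟨_, ?_, rfl⟩
  simp [map_mul, map_pow, abs_omega hd0, hc₁]
end

section
/- Failure of the entanglement-measurement attack: let d ≥ 2, ω = exp(2πi/d), H a complex vector space, and w : ZMod d → H (with w k = a_{kk}|e_{kk}⟩ the probe vector attached by the eavesdropper to basis state |k⟩). Suppose that for all j, m ∈ ZMod d with m ≠ j, Σ_{k ∈ ZMod d} ω^{k·(j−m)} • w k = 0 (the condition required for the attack to pass the X-basis eavesdropping check). Then for every j ∈ ZMod d the attacked Fourier-basis state is unentangled from the probe and the probe state is independent of j: in the tensor product (ZMod d → ℂ) ⊗[ℂ] H one has Σ_{k} ((1/√d)·ω^{k·j}) • (δ_k ⊗ w k) = (Σ_k (1/√d)·ω^{k·j} • δ_k) ⊗ w 0, i.e. U_E(|J_j⟩ ⊗ |E⟩) = |J_j⟩ ⊗ w 0, so the eavesdropper's probe carries the same state regardless of the transmitted particle. -/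
open TensorProduct

lemma omega_prim (d : ℕ) [NeZero d] : IsPrimitiveRoot (omega d) d :=
  Complex.isPrimitiveRoot_exp d (NeZero.ne d)

lemma omega_pow_mod (d : ℕ) [NeZero d] (n : ℕ) : omega d ^ (n % d) = omega d ^ n := by
  conv_rhs => rw [← Nat.mod_add_div n d]
  rw [pow_add, pow_mul, (omega_prim d).pow_eq_one, one_pow, mul_one]

lemma omega_pow_val_mul (d : ℕ) [NeZero d] (a b : ZMod d) :
    omega d ^ (a * b).val = omega d ^ (a.val * b.val) := by
  rw [ZMod.val_mul, omega_pow_mod]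

lemma omega_pow_val_add (d : ℕ) [NeZero d] (a b : ZMod d) :
    omega d ^ (a + b).val = omega d ^ a.val * omega d ^ b.val := by
  rw [ZMod.val_add, omega_pow_mod, pow_add]

lemma sum_zmod_val (d : ℕ) [NeZero d] (f : ℕ → ℂ) :
    ∑ t : ZMod d, f t.val = ∑ i ∈ Finset.range d, f i := by
  refine Finset.sum_bij' (fun t _ => t.val) (fun i _ => (i : ZMod d)) ?_ ?_ ?_ ?_ ?_ <;>
    simp [ZMod.val_lt, ZMod.val_cast_of_lt, ZMod.natCast_val, Finset.mem_range]
  intro a ha; exact Nat.mod_eq_of_lt ha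

/-- Orthogonality: for `s ≠ 0`, `Σ_t ω^{(s·t).val} = 0`. -/
lemma omega_orth (d : ℕ) [NeZero d] {s : ZMod d} (hs : s ≠ 0) :
    ∑ t : ZMod d, omega d ^ (s * t).val = 0 := by
  have hx : omega d ^ s.val ≠ 1 := by
    intro h
    have := (omega_prim d).pow_ne_one_of_pos_of_lt
      (show s.val ≠ 0 by simpa [ZMod.val_eq_zero] using hs) (ZMod.val_lt s)
    exact this h
  calc ∑ t : ZMod d, omega d ^ (s * t).val
      = ∑ t : ZMod d, (omega d ^ s.val) ^ t.val := by
        refine Finset.sum_congr rfl fun t _ => ?_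
        rw [omega_pow_val_mul, pow_mul]
    _ = ∑ i ∈ Finset.range d, (omega d ^ s.val) ^ i := sum_zmod_val d _
    _ = 0 := by
        rw [geom_sum_eq hx, ← pow_mul, mul_comm s.val d, pow_mul,
          (omega_prim d).pow_eq_one, one_pow, sub_self, zero_div]

lemma omega_orth' (d : ℕ) [NeZero d] (s : ZMod d) :
    ∑ t : ZMod d, omega d ^ (s * t).val = if s = 0 then (d : ℂ) else 0 := by
  split_ifs with h
  · subst h; simp [ZMod.val_zero]
  · exact omega_orth d h

/-- Failure of the entanglement-measurement attack: let `w k` be the eavesdropper's probe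
vector attached to the basis state `δ_k = |k⟩`.  If the no-detection condition
`Σ_k ω^{k·(j−m)} • w k = 0` holds for all `m ≠ j` (so the attack passes the X-basis check),
then for every `j` the attacked Fourier-basis state
`U_E(|J_j⟩ ⊗ |E⟩) = Σ_k (1/√d)·ω^{k·j} • (δ_k ⊗ w k)` is the unentangled state
`|J_j⟩ ⊗ w 0`: the probe carries the same state regardless of the transmitted particle. -/
theorem entanglement_attack_fails (d : ℕ) (hd : 2 ≤ d) [NeZero d]
    {H : Type*} [AddCommGroup H] [Module ℂ H] (w : ZMod d → H)
    (hw : ∀ j m : ZMod d, m ≠ j →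
      ∑ k : ZMod d, (omega d ^ (k * (j - m)).val) • w k = 0) :
    ∀ j : ZMod d,
      ∑ k : ZMod d, ((1 / Real.sqrt d : ℂ) * omega d ^ (k * j).val) •
          ((Pi.single k 1 : ZMod d → ℂ) ⊗ₜ[ℂ] w k) =
        (∑ k : ZMod d, ((1 / Real.sqrt d : ℂ) * omega d ^ (k * j).val) •
            (Pi.single k 1 : ZMod d → ℂ)) ⊗ₜ[ℂ] w 0 := by
  -- First, the hypothesis gives: for every nonzero t, Σ_k ω^{(k·t).val} • w k = 0.
  have hws : ∀ t : ZMod d, t ≠ 0 → ∑ k : ZMod d, (omega d ^ (k * t).val) • w k = 0 := by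
    intro t ht
    have := hw t 0 (fun h => ht h.symm)
    simpa using this
  -- Key: all the probe vectors coincide.
  have key : ∀ k₀ : ZMod d, w k₀ = w 0 := by
    have main : ∀ k₀ : ZMod d, (d : ℂ) • w k₀ = ∑ k : ZMod d, w k := by
      intro k₀
      have S1 : ∑ t : ZMod d, (omega d ^ ((-k₀) * t).val) •
          (∑ k : ZMod d, (omega d ^ (k * t).val) • w k) = ∑ k : ZMod d, w k := by
        rw [Finset.sum_eq_single 0]
        · simp [ZMod.val_zero]
        · intro t _ ht
          rw [hws t ht, smul_zero]
        · simp
      have S2 : ∑ t : ZMod d, (omega d ^ ((-k₀) * t).val) •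
          (∑ k : ZMod d, (omega d ^ (k * t).val) • w k) = (d : ℂ) • w k₀ := by
        calc ∑ t : ZMod d, (omega d ^ ((-k₀) * t).val) •
              (∑ k : ZMod d, (omega d ^ (k * t).val) • w k)
            = ∑ t : ZMod d, ∑ k : ZMod d, (omega d ^ ((k - k₀) * t).val) • w k := by
              refine Finset.sum_congr rfl fun t _ => ?_
              rw [Finset.smul_sum]
              refine Finset.sum_congr rfl fun k _ => ?_
              rw [smul_smul, ← omega_pow_val_add]
              congr 2
              ring
          _ = ∑ k : ZMod d, (∑ t : ZMod d, omega d ^ ((k - k₀) * t).val) • w k := by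
              rw [Finset.sum_comm]
              exact Finset.sum_congr rfl fun k _ => (Finset.sum_smul).symm
          _ = (d : ℂ) • w k₀ := by
              rw [Finset.sum_eq_single k₀]
              · rw [omega_orth' d, if_pos (sub_self k₀)]
              · intro k _ hk
                rw [omega_orth' d, if_neg (sub_ne_zero.mpr hk), zero_smul]
              · simp
      rw [← S2, S1]
    intro k₀
    have h := (main k₀).trans (main 0).symm
    have hdne : (d : ℂ) ≠ 0 := Nat.cast_ne_zero.mpr (NeZero.ne d)
    exact smul_right_injective H hdne h
  intro j
  rw [TensorProduct.sum_tmul]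
  refine Finset.sum_congr rfl fun k _ => ?_
  rw [key k, TensorProduct.smul_tmul']
end
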